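/- arXiv:2412.13353 — 2 statements merged into one kernel-verified Lean document; each statement's English description precedes it below -/
import Mathlib

section
/- In the ring R = ℤ[d₂, d₃, d₄, y]/(2d₃, y·d₃, y² − 4d₄), the element y is not divisible by 2, but y² is divisible by 4 (indeed y² = 4d₄). -/
open MvPolynomial

/-- The defining ideal of `CH^*(BSO₄) = ℤ[d₂,d₃,d₄,y]/(2d₃, y·d₃, y² - 4d₄)`,
with variables `X 0 = d₂`, `X 1 = d₃`, `X 2 = d₄`, `X 3 = y`. -/
noncomputable def chowIdeal : Ideal (MvPolynomial (Fin 4) ℤ) :=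
  Ideal.span {2 * X 1, X 3 * X 1, X 3 ^ 2 - 4 * X 2}

/-- The Chow ring of `BSO₄`. -/
noncomputable abbrev ChowR : Type := MvPolynomial (Fin 4) ℤ ⧸ chowIdeal

noncomputable def evalHom : MvPolynomial (Fin 4) ℤ →+* DualNumber (ZMod 2) :=
  (aeval ![0, 0, 0, DualNumber.eps] : MvPolynomial (Fin 4) ℤ →ₐ[ℤ] DualNumber (ZMod 2)).toRingHom

lemma two_eq_zero : (2 : DualNumber (ZMod 2)) = 0 := by
  have h1 : TrivSqZeroExt.fst (2 : DualNumber (ZMod 2)) = 0 := by decide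
  have h2 : TrivSqZeroExt.snd (2 : DualNumber (ZMod 2)) = 0 := by decide
  calc (2 : DualNumber (ZMod 2))
      = TrivSqZeroExt.inl (TrivSqZeroExt.fst (2 : DualNumber (ZMod 2)))
        + TrivSqZeroExt.inr (TrivSqZeroExt.snd (2 : DualNumber (ZMod 2))) :=
        (TrivSqZeroExt.inl_fst_add_inr_snd_eq _).symm
    _ = 0 := by rw [h1, h2]; simp

lemma eps_ne_zero' : (DualNumber.eps : DualNumber (ZMod 2)) ≠ 0 := fun h => by
  have := congrArg TrivSqZeroExt.snd h
  rw [DualNumber.eps, TrivSqZeroExt.snd_inr, TrivSqZeroExt.snd_zero] at this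
  exact one_ne_zero this

lemma chowIdeal_le_ker : chowIdeal ≤ RingHom.ker evalHom := by
  rw [chowIdeal, Ideal.span_le]
  rintro p hp
  simp only [Set.mem_insert_iff, Set.mem_singleton_iff] at hp
  rcases hp with rfl | rfl | rfl <;>
    simp [evalHom, RingHom.mem_ker, two_eq_zero, DualNumber.eps_mul_eps, sq]

noncomputable def qHom : ChowR →+* DualNumber (ZMod 2) :=
  Ideal.Quotient.lift chowIdeal evalHom chowIdeal_le_ker

/-- In `CH^*(BSO₄)`, `y` is not divisible by `2`, but `y² = 4d₄` is divisible by `4`. -/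
theorem stmt_7 :
    (¬ ∃ s : ChowR, Ideal.Quotient.mk chowIdeal (X 3) = 2 * s) ∧
    Ideal.Quotient.mk chowIdeal (X 3) ^ 2 = 4 * Ideal.Quotient.mk chowIdeal (X 2) ∧
    (∃ s : ChowR, Ideal.Quotient.mk chowIdeal (X 3) ^ 2 = 4 * s) := by
  refine ⟨?_, ?_, ⟨Ideal.Quotient.mk chowIdeal (X 2), ?_⟩⟩
  · rintro ⟨s, hs⟩
    have h := congrArg qHom hs
    rw [map_mul, map_ofNat] at h
    have h2 : qHom (Ideal.Quotient.mk chowIdeal (X 3)) = DualNumber.eps := by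
      simp [qHom, evalHom]
    rw [h2, two_eq_zero, zero_mul] at h
    exact eps_ne_zero' h
  · have : Ideal.Quotient.mk chowIdeal (X 3 ^ 2 - 4 * X 2) = 0 := by
      rw [Ideal.Quotient.eq_zero_iff_mem]
      exact Ideal.subset_span (by simp)
    rw [map_sub, map_mul, sub_eq_zero] at this
    rw [map_ofNat] at this; exact this
  · have : Ideal.Quotient.mk chowIdeal (X 3 ^ 2 - 4 * X 2) = 0 := by
      rw [Ideal.Quotient.eq_zero_iff_mem]
      exact Ideal.subset_span (by simp)
    rw [map_sub, map_mul, sub_eq_zero] at this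
    rw [map_ofNat] at this; exact this
end

section
/- Let μ: (ℤ/2)[p₁, e, b] → (ℤ/2)[w₂, w₃, w₄] be the ring homomorphism with μ(p₁) = w₂², μ(e) = w₄, μ(b) = w₃, and let β be the derivation on (ℤ/2)[w₂, w₃, w₄] with β(w₂) = w₃, β(w₃) = β(w₄) = 0. Then the image of μ equals the kernel of β. -/
open MvPolynomial

/-- `(ℤ/2)[w₂, w₃, w₄]`, with `X 0 = w₂`, `X 1 = w₃`, `X 2 = w₄`. -/
noncomputable abbrev T3 : Type := MvPolynomial (Fin 3) (ZMod 2)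

/-- The Bockstein derivation `β` with `β w₂ = w₃`, `β w₃ = 0`, `β w₄ = 0`. -/
noncomputable def bock : Derivation (ZMod 2) T3 T3 :=
  MvPolynomial.mkDerivation (ZMod 2) ![X 1, 0, 0]

/-- The map `μ : (ℤ/2)[p₁,e,b] → (ℤ/2)[w₂,w₃,w₄]`, `p₁ ↦ w₂²`, `e ↦ w₄`, `b ↦ w₃`. -/
noncomputable def muBar : MvPolynomial (Fin 3) (ZMod 2) →ₐ[ZMod 2] T3 :=
  MvPolynomial.aeval ![(X 0 : T3) ^ 2, X 2, X 1]

lemma bock_eq (p : T3) : bock p = X 1 * pderiv 0 p := by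
  have : bock = (X 1 : T3) • pderiv 0 := by
    apply MvPolynomial.derivation_ext
    intro i
    fin_cases i <;>
      simp [bock, MvPolynomial.mkDerivation_X, pderiv_X_self, pderiv_X_of_ne,
        Matrix.cons_val_zero, Matrix.cons_val_one]
  rw [this]; rfl

lemma pderiv_muBar (q : MvPolynomial (Fin 3) (ZMod 2)) : pderiv 0 (muBar q) = 0 := by
  induction q using MvPolynomial.induction_on with
  | C a => simp [muBar]
  | add p q hp hq => simp [map_add, hp, hq]
  | mul_X p i hp =>
    have h20 : (2 : T3) = 0 := by
      simpa using CharP.cast_eq_zero T3 2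
    have hX : pderiv (0 : Fin 3) (muBar (X i)) = 0 := by
      fin_cases i <;>
        simp [muBar, pderiv_pow, pderiv_X_self, pderiv_X_of_ne, h20]
    rw [map_mul, pderiv_mul, hp, zero_mul, zero_add, hX, mul_zero]

theorem even_of_pderiv_zero (p : T3) (h : pderiv 0 p = 0) :
    ∀ m ∈ p.support, Even (m 0) := by
  intro m hm
  by_contra hodd
  rw [Nat.not_even_iff_odd] at hodd
  have hm1 : 1 ≤ m 0 := hodd.pos
  have hcoeff : coeff (m - Finsupp.single 0 1) (pderiv 0 p) = coeff m p := by
    conv_lhs => rw [p.as_sum]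
    rw [map_sum]
    simp only [pderiv_monomial, coeff_sum]
    rw [Finset.sum_eq_single m]
    · have hcast : ((m 0 : ZMod 2)) = 1 := by
        obtain ⟨k, hk⟩ := hodd
        have h2 : (2 : ZMod 2) = 0 := by decide
        rw [hk]; push_cast; rw [h2]; ring
      simp [coeff_monomial, hcast]
    · intro v hv hvm
      rw [coeff_monomial]
      split_ifs with he
      · -- v - single 0 1 = m - single 0 1, v ≠ m ⟹ v 0 = 0
        have hv0 : v 0 = 0 := by
          by_contra hv0
          apply hvm
          have h1 : Finsupp.single (0 : Fin 3) 1 ≤ v := by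
            rw [Finsupp.single_le_iff]; omega
          have h2 : Finsupp.single (0 : Fin 3) 1 ≤ m := by
            rw [Finsupp.single_le_iff]; omega
          have := congrArg (· + Finsupp.single (0 : Fin 3) 1) he
          simpa [tsub_add_cancel_of_le h1, tsub_add_cancel_of_le h2] using this
        simp [hv0]
      · rfl
    · intro hmm; exact absurd hm hmm
  rw [h, coeff_zero] at hcoeff
  exact (MvPolynomial.mem_support_iff.mp hm) hcoeff.symm

theorem mem_range_of_even (p : T3) (h : ∀ m ∈ p.support, Even (m 0)) :
    p ∈ Set.range ⇑muBar := by
  refine ⟨∑ m ∈ p.support, monomial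
      (Finsupp.equivFunOnFinite.symm ![m 0 / 2, m 2, m 1]) (coeff m p), ?_⟩
  rw [map_sum]
  conv_rhs => rw [p.as_sum]
  refine Finset.sum_congr rfl fun m hm => ?_
  have hev := h m hm
  rw [muBar, aeval_monomial, monomial_eq]
  rw [Finsupp.prod_fintype _ _ (fun i => pow_zero _),
      Finsupp.prod_fintype _ _ (fun i => pow_zero _)]
  rw [Fin.prod_univ_three, Fin.prod_univ_three]
  simp only [Finsupp.coe_equivFunOnFinite_symm, Matrix.cons_val_zero,
    Matrix.cons_val_one, Matrix.head_cons, Matrix.cons_val_two, Matrix.tail_cons]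
  have h2 : ((X 0 : T3) ^ 2) ^ (m 0 / 2) = X 0 ^ (m 0) := by
    rw [← pow_mul, Nat.mul_div_cancel' hev.two_dvd]
  rw [h2, algebraMap_eq]
  ring

/-- The image of `μ` is exactly the kernel of the Bockstein `β`. -/
theorem stmt_10 : Set.range ⇑muBar = {p : T3 | bock p = 0} := by
  ext p
  simp only [Set.mem_setOf_eq, bock_eq]
  constructor
  · rintro ⟨q, rfl⟩
    rw [pderiv_muBar, mul_zero]
  · intro h
    have hz : pderiv 0 p = 0 := by
      rcases mul_eq_zero.mp h with h1 | h2
      · exact absurd h1 (MvPolynomial.X_ne_zero 1)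
      · exact h2
    exact mem_range_of_even p (even_of_pderiv_zero p hz)
end
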